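/- Let z0 ≠ zf ∈ ℝ², d = ‖zf − z0‖, t_f > d, and v = (zf − z0)/d. Let α be the unique solution in (0, π) of sin α = (d/t_f)·α. If α − sin α < π/2 (equivalently, d/t_f > b, where b is the threshold defined by sinc⁻¹(b)(1 − b) = π/2), then there exists an admissible curve for the data (z0, v, zf, v, t_f) whose maximum curvature is strictly less than 2π/(t_f − d). Consequently, any admissible curve for this data with maximum curvature equal to 2π/(t_f − d) — in particular any path of type SOS, consisting of a straight segment, a full circle of radius (t_f − d)/(2π), and a straight segment — is not a minimiser of Problem (P). -/

import Mathlib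

open Set MeasureTheory Real

set_option maxHeartbeats 2000000

noncomputable section

/-- Points of the Euclidean plane. -/
abbrev Pt : Type := EuclideanSpace ℝ (Fin 2)

/-- The point of the plane with coordinates `(x, y)`. -/
def pt (x y : ℝ) : Pt := (WithLp.equiv 2 (Fin 2 → ℝ)).symm ![x, y]

/-- Rotation of the plane by `π/2`. -/
def J (v : Pt) : Pt := pt (-(v 1)) (v 0)

/-- `z`, with derivative `z'`, is an admissible curve on `[t1, t2]` for the oriented
endpoint data `(p0, u0)`, `(p1, u1)`: it is differentiable with Lipschitz (hence
continuous) derivative `z'`, has unit speed, and matches the endpoint data. -/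
def AdmissibleOn (t1 t2 : ℝ) (p0 u0 p1 u1 : Pt) (z z' : ℝ → Pt) : Prop :=
  (∀ t ∈ Icc t1 t2, HasDerivWithinAt z (z' t) (Icc t1 t2) t) ∧
  (∃ K : NNReal, LipschitzOnWith K z' (Icc t1 t2)) ∧
  (∀ t ∈ Icc t1 t2, ‖z' t‖ = 1) ∧
  z t1 = p0 ∧ z t2 = p1 ∧ z' t1 = u0 ∧ z' t2 = u1

/-- The maximum curvature of a unit-speed curve with derivative `z'` on the set `s`:
the least Lipschitz constant of `z'` on `s` (equivalently, the essential supremum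
of the norm of the second derivative). -/
def maxCurvOn (s : Set ℝ) (z' : ℝ → Pt) : ℝ :=
  sInf {a : ℝ | 0 ≤ a ∧ LipschitzOnWith (Real.toNNReal a) z' s}

/-- The piece `[s1, s2]` of the unit-speed curve with derivative `z'` is a circular
arc of signed curvature `ω`: `z'' = ω • J z'` a.e. there. -/
def IsArcOn (z' : ℝ → Pt) (ω s1 s2 : ℝ) : Prop :=
  ∀ᵐ t ∂volume, t ∈ Ioo s1 s2 → HasDerivAt z' (ω • J (z' t)) t

/-- The piece `[s1, s2]` of the unit-speed curve with derivative `z'` is a straight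
line segment: `z'` is constant there. -/
def IsLineOn (z' : ℝ → Pt) (s1 s2 : ℝ) : Prop :=
  ∀ s ∈ Icc s1 s2, ∀ t ∈ Icc s1 s2, z' s = z' t

/-- The piece `[s1, s2]` is a full circular loop of curvature `a`: a circular arc of
signed curvature `±a` whose turning angle is a positive integer multiple of `2π`. -/
def IsFullLoopOn (z' : ℝ → Pt) (a s1 s2 : ℝ) : Prop :=
  ∃ ω : ℝ, |ω| = a ∧ IsArcOn z' ω s1 s2 ∧ ∃ k : ℕ, 0 < k ∧ a * (s2 - s1) = 2 * π * k

lemma pt_apply0 (x y : ℝ) : pt x y 0 = x := rfl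
lemma pt_apply1 (x y : ℝ) : pt x y 1 = y := rfl

lemma norm_eq_sqrt' (u : Pt) : ‖u‖ = Real.sqrt ((u 0)^2 + (u 1)^2) := by
  rw [EuclideanSpace.norm_eq, Fin.sum_univ_two]
  simp [Real.norm_eq_abs, sq_abs]

lemma dist_circle' (a b : ℝ) :
    Real.sqrt ((Real.cos a - Real.cos b)^2 + (Real.sin a - Real.sin b)^2) ≤ |a - b| := by
  have h1 : (Real.cos a - Real.cos b)^2 + (Real.sin a - Real.sin b)^2
      = 2 - 2 * Real.cos (a - b) := by
    rw [Real.cos_sub]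
    nlinarith [Real.sin_sq_add_cos_sq a, Real.sin_sq_add_cos_sq b]
  have h2 : 2 - 2 * Real.cos (a - b) ≤ (a - b)^2 := by
    have hc := Real.cos_sq ((a - b) / 2)
    rw [show 2 * ((a - b) / 2) = a - b by ring] at hc
    nlinarith [hc, Real.sin_sq_add_cos_sq ((a - b) / 2), Real.sin_sq_le_sq (x := (a - b) / 2)]
  calc Real.sqrt ((Real.cos a - Real.cos b)^2 + (Real.sin a - Real.sin b)^2)
      ≤ Real.sqrt ((a - b)^2) := Real.sqrt_le_sqrt (by linarith)
    _ = |a - b| := Real.sqrt_sq_eq_abs _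

lemma integral_cos_lin (p q a b : ℝ) (hp : p ≠ 0) :
    ∫ t in a..b, Real.cos (p*t+q) = (Real.sin (p*b+q) - Real.sin (p*a+q)) / p := by
  have h : ∀ t : ℝ, HasDerivAt (fun t => Real.sin (p*t+q) / p) (Real.cos (p*t+q)) t := by
    intro t
    have hl : HasDerivAt (fun t : ℝ => p*t+q) p t := by
      simpa using ((hasDerivAt_id t).const_mul p).add_const q
    have := (hl.sin).div_const p
    simpa [mul_div_cancel_right₀ _ hp] using this
  rw [intervalIntegral.integral_eq_sub_of_hasDerivAt (fun t _ => h t)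
      ((Continuous.intervalIntegrable (by continuity) a b))]
  ring

lemma integral_sin_lin (p q a b : ℝ) (hp : p ≠ 0) :
    ∫ t in a..b, Real.sin (p*t+q) = (Real.cos (p*a+q) - Real.cos (p*b+q)) / p := by
  have h : ∀ t : ℝ, HasDerivAt (fun t => -Real.cos (p*t+q) / p) (Real.sin (p*t+q)) t := by
    intro t
    have hl : HasDerivAt (fun t : ℝ => p*t+q) p t := by
      simpa using ((hasDerivAt_id t).const_mul p).add_const q
    have := ((hl.cos).neg).div_const p
    simpa [neg_mul, mul_div_cancel_right₀ _ hp, neg_div] using this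
  rw [intervalIntegral.integral_eq_sub_of_hasDerivAt (fun t _ => h t)
      ((Continuous.intervalIntegrable (by continuity) a b))]
  ring

lemma max_sub_max_le' (c x y : ℝ) : max c x - max c y ≤ max (x - y) 0 := by
  rcases max_cases c x with ⟨e1, h1⟩|⟨e1, h1⟩ <;> rcases max_cases c y with ⟨e2, h2⟩|⟨e2, h2⟩ <;>
    rw [e1, e2] <;> rcases le_total (x - y) 0 with h|h <;>
    first
      | (rw [max_eq_right h]; linarith)
      | (rw [max_eq_left h]; linarith)
      | rw [max_eq_right h]
      | rw [max_eq_left h]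

lemma min_sub_min_le' (c x y : ℝ) : min x c - min y c ≤ max (x - y) 0 := by
  rcases min_cases x c with ⟨e1, h1⟩|⟨e1, h1⟩ <;> rcases min_cases y c with ⟨e2, h2⟩|⟨e2, h2⟩ <;>
    rw [e1, e2] <;> rcases le_total (x - y) 0 with h|h <;>
    first
      | (rw [max_eq_right h]; linarith)
      | (rw [max_eq_left h]; linarith)
      | rw [max_eq_right h]
      | rw [max_eq_left h]

lemma exists_better (z0 zf : Pt) (hne : z0 ≠ zf) (tf α d : ℝ)
    (hd : d = ‖zf - z0‖) (htf : d < tf)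
    (v : Pt) (hv : v = d⁻¹ • (zf - z0))
    (hα : α ∈ Ioo (0:ℝ) π) (hαeq : Real.sin α = (d / tf) * α)
    (hcrit : α - Real.sin α < π / 2) :
    ∃ w w' : ℝ → Pt, AdmissibleOn 0 tf z0 v zf v w w' ∧
        maxCurvOn (Icc 0 tf) w' < 2 * π / (tf - d) := by
  obtain ⟨hα0, hαπ⟩ := hα
  have hdpos : 0 < d := by
    rw [hd]; exact norm_pos_iff.mpr (sub_ne_zero.mpr (Ne.symm hne))
  have htf0 : 0 < tf := hdpos.trans htf
  set κ : ℝ := 4 * α / tf with hκdef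
  have hκ0 : 0 < κ := by positivity
  set θ : ℝ → ℝ := fun t => κ * t + 2 * α - 2 * max α (min (κ * t) (3 * α)) with hθdef
  set w' : ℝ → Pt := fun t => Real.cos (θ t) • v + Real.sin (θ t) • J v with hw'def
  have hq1 : κ * (tf / 4) = α := by rw [hκdef]; field_simp
  have hq3 : κ * (3 * tf / 4) = 3 * α := by rw [hκdef]; field_simp; try ring
  have hq4 : κ * tf = 4 * α := by rw [hκdef]; field_simp; try ring
  -- piecewise description of θ
  have hθ1 : ∀ t ∈ Icc (0:ℝ) (tf/4), θ t = κ * t + 0 := by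
    intro t ht
    have h1 : κ * t ≤ α := by nlinarith [ht.2, hκ0.le]
    have h2 : 0 ≤ κ * t := mul_nonneg hκ0.le ht.1
    simp only [hθdef]
    rw [min_eq_left (by linarith), max_eq_left (by linarith)]
    ring
  have hθ2 : ∀ t ∈ Icc (tf/4) (3*tf/4), θ t = (-κ) * t + 2 * α := by
    intro t ht
    have h1 : α ≤ κ * t := by nlinarith [ht.1, hκ0.le]
    have h2 : κ * t ≤ 3 * α := by nlinarith [ht.2, hκ0.le]
    simp only [hθdef]
    rw [min_eq_left h2, max_eq_right h1]
    ring
  have hθ3 : ∀ t ∈ Icc (3*tf/4) tf, θ t = κ * t + -(4 * α) := by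
    intro t ht
    have h1 : 3 * α ≤ κ * t := by nlinarith [ht.1, hκ0.le]
    simp only [hθdef]
    rw [min_eq_right h1, max_eq_right (by linarith)]
    ring
  have hθ0 : θ 0 = 0 := by
    have := hθ1 0 ⟨le_refl 0, by positivity⟩
    simpa using this
  have hθtf : θ tf = 0 := by
    have := hθ3 tf ⟨by linarith, le_refl tf⟩
    rw [this]
    linarith [hq4]
  -- norms
  have hvnorm : ‖v‖ = 1 := by
    rw [hv, norm_smul, Real.norm_eq_abs, abs_of_pos (inv_pos.mpr hdpos), ← hd]
    field_simp
  have hv1 : (v 0)^2 + (v 1)^2 = 1 := by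
    have h := hvnorm
    rw [norm_eq_sqrt'] at h
    have h2 := Real.sq_sqrt (show (0:ℝ) ≤ (v 0)^2 + (v 1)^2 by positivity)
    rw [h] at h2
    nlinarith [h2]
  have happ0 : ∀ a b : ℝ, (a • v + b • J v) 0 = a * v 0 + b * (-(v 1)) := by
    intro a b
    simp [J, pt_apply0]
  have happ1 : ∀ a b : ℝ, (a • v + b • J v) 1 = a * v 1 + b * (v 0) := by
    intro a b
    simp [J, pt_apply1]
  have hcomb : ∀ a b : ℝ, ‖a • v + b • J v‖ = Real.sqrt (a^2 + b^2) := by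
    intro a b
    rw [norm_eq_sqrt', happ0, happ1]
    congr 1
    linear_combination (a^2 + b^2) * hv1
  have hnorm : ∀ t : ℝ, ‖w' t‖ = 1 := by
    intro t
    simp only [hw'def]
    rw [hcomb, Real.cos_sq_add_sin_sq, Real.sqrt_one]
  -- Lipschitz bound on θ
  have hθlip : ∀ s t : ℝ, |θ s - θ t| ≤ κ * |s - t| := by
    have key : ∀ s t : ℝ, s ≤ t → |θ s - θ t| ≤ κ * (t - s) := by
      intro s t hst
      have hκst : κ * s ≤ κ * t := mul_le_mul_of_nonneg_left hst hκ0.le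
      have hminmono : min (κ*s) (3*α) ≤ min (κ*t) (3*α) := min_le_min hκst le_rfl
      have hmono : max α (min (κ*s) (3*α)) ≤ max α (min (κ*t) (3*α)) :=
        max_le_max le_rfl hminmono
      have h1 := max_sub_max_le' α (min (κ*t) (3*α)) (min (κ*s) (3*α))
      rw [max_eq_left (show (0:ℝ) ≤ min (κ*t) (3*α) - min (κ*s) (3*α) by linarith)] at h1
      have h2 := min_sub_min_le' (3*α) (κ*t) (κ*s)
      rw [max_eq_left (show (0:ℝ) ≤ κ*t - κ*s by linarith)] at h2
      rw [abs_le]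
      constructor <;> simp only [hθdef] <;> linarith
    intro s t
    rcases le_total s t with h|h
    · have h2 : κ * |s - t| = κ * (t - s) := by
        rw [abs_of_nonpos (by linarith)]; ring
      rw [h2]; exact key s t h
    · have h2 : κ * |s - t| = κ * (s - t) := by
        rw [abs_of_nonneg (by linarith)]
      rw [h2, abs_sub_comm]; exact key t s h
  have hw'lip : LipschitzOnWith (Real.toNNReal κ) w' (Icc 0 tf) := by
    rw [lipschitzOnWith_iff_dist_le_mul]
    intro x _ y _
    rw [dist_eq_norm, Real.dist_eq]
    have hsub : w' x - w' y
        = (Real.cos (θ x) - Real.cos (θ y)) • v + (Real.sin (θ x) - Real.sin (θ y)) • J v := by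
      simp only [hw'def, sub_smul]
      abel
    rw [hsub, hcomb, Real.coe_toNNReal _ hκ0.le]
    exact le_trans (dist_circle' _ _) (hθlip x y)
  -- continuity
  have hθcont : Continuous θ := by
    rw [hθdef]
    exact ((continuous_const.mul continuous_id).add continuous_const).sub
      (continuous_const.mul (continuous_const.max
        ((continuous_const.mul continuous_id).min continuous_const)))
  have hw'cont : Continuous w' := by
    rw [hw'def]
    exact ((Real.continuous_cos.comp hθcont).smul continuous_const).add
      ((Real.continuous_sin.comp hθcont).smul continuous_const)
  set w : ℝ → Pt := fun t => z0 + ∫ s in (0:ℝ)..t, w' s with hwdef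
  have hwd : ∀ t : ℝ, HasDerivAt w (w' t) t := by
    intro t
    exact ((hw'cont.integral_hasStrictDerivAt 0 t).hasDerivAt).const_add z0
  -- the integrals
  have hccont : Continuous fun t => Real.cos (θ t) := Real.continuous_cos.comp hθcont
  have hscont : Continuous fun t => Real.sin (θ t) := Real.continuous_sin.comp hθcont
  have hcint : ∀ a b : ℝ, IntervalIntegrable (fun t => Real.cos (θ t)) volume a b :=
    fun a b => hccont.intervalIntegrable a b
  have hsint : ∀ a b : ℝ, IntervalIntegrable (fun t => Real.sin (θ t)) volume a b :=
    fun a b => hscont.intervalIntegrable a b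
  have a1 : κ * (tf/4) + 0 = α := by linarith
  have a2 : κ * 0 + 0 = (0:ℝ) := by ring
  have a3 : (-κ) * (3*tf/4) + 2*α = -α := by linarith
  have a4 : (-κ) * (tf/4) + 2*α = α := by linarith
  have a5 : κ * tf + -(4*α) = 0 := by linarith
  have a6 : κ * (3*tf/4) + -(4*α) = -α := by linarith
  have e1c : ∫ s in (0:ℝ)..(tf/4), Real.cos (θ s) = ∫ s in (0:ℝ)..(tf/4), Real.cos (κ*s + 0) := by
    apply intervalIntegral.integral_congr
    intro s hs
    rw [uIcc_of_le (by positivity)] at hs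
    beta_reduce
    rw [hθ1 s hs]
  have e2c : ∫ s in (tf/4)..(3*tf/4), Real.cos (θ s)
      = ∫ s in (tf/4)..(3*tf/4), Real.cos ((-κ)*s + 2*α) := by
    apply intervalIntegral.integral_congr
    intro s hs
    rw [uIcc_of_le (by linarith)] at hs
    beta_reduce
    rw [hθ2 s hs]
  have e3c : ∫ s in (3*tf/4)..tf, Real.cos (θ s)
      = ∫ s in (3*tf/4)..tf, Real.cos (κ*s + -(4*α)) := by
    apply intervalIntegral.integral_congr
    intro s hs
    rw [uIcc_of_le (by linarith)] at hs
    beta_reduce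
    rw [hθ3 s hs]
  have e1s : ∫ s in (0:ℝ)..(tf/4), Real.sin (θ s) = ∫ s in (0:ℝ)..(tf/4), Real.sin (κ*s + 0) := by
    apply intervalIntegral.integral_congr
    intro s hs
    rw [uIcc_of_le (by positivity)] at hs
    beta_reduce
    rw [hθ1 s hs]
  have e2s : ∫ s in (tf/4)..(3*tf/4), Real.sin (θ s)
      = ∫ s in (tf/4)..(3*tf/4), Real.sin ((-κ)*s + 2*α) := by
    apply intervalIntegral.integral_congr
    intro s hs
    rw [uIcc_of_le (by linarith)] at hs
    beta_reduce
    rw [hθ2 s hs]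
  have e3s : ∫ s in (3*tf/4)..tf, Real.sin (θ s)
      = ∫ s in (3*tf/4)..tf, Real.sin (κ*s + -(4*α)) := by
    apply intervalIntegral.integral_congr
    intro s hs
    rw [uIcc_of_le (by linarith)] at hs
    beta_reduce
    rw [hθ3 s hs]
  have hIc : ∫ s in (0:ℝ)..tf, Real.cos (θ s) = d := by
    rw [← intervalIntegral.integral_add_adjacent_intervals (hcint 0 (tf/4)) (hcint (tf/4) tf),
        ← intervalIntegral.integral_add_adjacent_intervals (hcint (tf/4) (3*tf/4)) (hcint (3*tf/4) tf),
        e1c, e2c, e3c,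
        integral_cos_lin κ 0 0 (tf/4) (ne_of_gt hκ0),
        integral_cos_lin (-κ) (2*α) (tf/4) (3*tf/4) (neg_ne_zero.mpr (ne_of_gt hκ0)),
        integral_cos_lin κ (-(4*α)) (3*tf/4) tf (ne_of_gt hκ0),
        a1, a2, a3, a4, a5, a6, Real.sin_neg, Real.sin_zero]
    have hsin : Real.sin α = d * α / tf := by rw [hαeq]; ring
    rw [hsin, hκdef]
    field_simp
    ring
  have hIs : ∫ s in (0:ℝ)..tf, Real.sin (θ s) = 0 := by
    rw [← intervalIntegral.integral_add_adjacent_intervals (hsint 0 (tf/4)) (hsint (tf/4) tf),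
        ← intervalIntegral.integral_add_adjacent_intervals (hsint (tf/4) (3*tf/4)) (hsint (3*tf/4) tf),
        e1s, e2s, e3s,
        integral_sin_lin κ 0 0 (tf/4) (ne_of_gt hκ0),
        integral_sin_lin (-κ) (2*α) (tf/4) (3*tf/4) (neg_ne_zero.mpr (ne_of_gt hκ0)),
        integral_sin_lin κ (-(4*α)) (3*tf/4) tf (ne_of_gt hκ0),
        a1, a2, a3, a4, a5, a6, Real.cos_neg, Real.cos_zero]
    field_simp
    ring
  have hintegral : ∫ s in (0:ℝ)..tf, w' s = zf - z0 := by
    simp only [hw'def]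
    rw [intervalIntegral.integral_add (f := fun t => Real.cos (θ t) • v) (g := fun t => Real.sin (θ t) • J v)
        ((hccont.smul continuous_const).intervalIntegrable 0 tf)
        ((hscont.smul continuous_const).intervalIntegrable 0 tf),
      intervalIntegral.integral_smul_const, intervalIntegral.integral_smul_const, hIc, hIs,
      zero_smul, add_zero, hv, smul_smul, mul_inv_cancel₀ (ne_of_gt hdpos), one_smul]
  have hw0 : w 0 = z0 := by
    simp [hwdef]
  have hwtf : w tf = zf := by
    simp only [hwdef]
    rw [hintegral]
    abel
  have hw'0 : w' 0 = v := by
    simp only [hw'def]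
    rw [hθ0]
    simp
  have hw'tf : w' tf = v := by
    simp only [hw'def]
    rw [hθtf]
    simp
  have hκlt : κ < 2 * π / (tf - d) := by
    rw [hκdef, div_lt_div_iff₀ htf0 (by linarith)]
    have hda : d * α = tf * Real.sin α := by
      rw [hαeq]
      field_simp
      try ring
    nlinarith [mul_lt_mul_of_pos_left hcrit (show (0:ℝ) < 4*tf by linarith), hda]
  refine ⟨w, w', ⟨fun t _ => (hwd t).hasDerivWithinAt, ⟨Real.toNNReal κ, hw'lip⟩,
    fun t _ => hnorm t, hw0, hwtf, hw'0, hw'tf⟩, ?_⟩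
  have hmem : κ ∈ {a : ℝ | 0 ≤ a ∧ LipschitzOnWith (Real.toNNReal a) w' (Icc 0 tf)} :=
    ⟨hκ0.le, hw'lip⟩
  have hbdd : BddBelow {a : ℝ | 0 ≤ a ∧ LipschitzOnWith (Real.toNNReal a) w' (Icc 0 tf)} :=
    ⟨0, fun a ha => ha.1⟩
  exact lt_of_le_of_lt (csInf_le hbdd hmem) hκlt

/-- Proposition 2 of the paper: non-optimality of `SOS` paths.
Let `d = ‖zf − z0‖ < tf`, `v` the unit vector from `z0` to `zf`, and `α ∈ (0, π)` the
solution of `sin α = (d/tf) α`. If `α − sin α < π/2` (i.e. `d/tf > b`), then some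
admissible curve for the data `(z0, v, zf, v, tf)` has maximum curvature strictly less
than `2π/(tf − d)`; consequently no admissible curve of maximum curvature `2π/(tf − d)`
— in particular no path of type `SOS` — is a minimiser of Problem (P). -/
theorem stmt11 (z0 zf : Pt) (hne : z0 ≠ zf) (tf α d : ℝ)
    (hd : d = ‖zf - z0‖) (htf : d < tf)
    (v : Pt) (hv : v = d⁻¹ • (zf - z0))
    (hα : α ∈ Ioo (0:ℝ) π) (hαeq : Real.sin α = (d / tf) * α)
    (hcrit : α - Real.sin α < π / 2) :
    (∃ w w' : ℝ → Pt, AdmissibleOn 0 tf z0 v zf v w w' ∧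
        maxCurvOn (Icc 0 tf) w' < 2 * π / (tf - d)) ∧
      ∀ z z' : ℝ → Pt, AdmissibleOn 0 tf z0 v zf v z z' →
        maxCurvOn (Icc 0 tf) z' = 2 * π / (tf - d) →
          ¬ ∀ w w' : ℝ → Pt, AdmissibleOn 0 tf z0 v zf v w w' →
              maxCurvOn (Icc 0 tf) z' ≤ maxCurvOn (Icc 0 tf) w' := by
  obtain ⟨w, w', hadm, hlt⟩ := exists_better z0 zf hne tf α d hd htf v hv hα hαeq hcrit
  refine ⟨⟨w, w', hadm, hlt⟩, ?_⟩
  intro z z' _ heq hall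
  have h := hall w w' hadm
  rw [heq] at h
  linarith
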